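/- Let G be a digraph and ξ a primitive N-th root of unity. Every element v of Ω_n^{N,1}(P(G)) decomposes as a sum v = Σ_{a,b} v_{a,b}, where each v_{a,b} is an (a,b)-cluster (a linear combination of n-paths all starting at a and ending at b) and each v_{a,b} itself lies in Ω_n^{N,1}. -/

import Mathlib

open scoped BigOperators Classical

/-- `Lam V p` is the free ℂ-vector space on sequences of `p` elements of `V`
(elementary `n`-paths, having `n+1` vertices, live in `Lam V (n+1)`). -/
abbrev Lam (V : Type) (p : ℕ) := (Fin p → V) →₀ ℂ

/-- A sequence is regular if consecutive entries are different. -/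
def RegularPath {V : Type} {p : ℕ} (f : Fin p → V) : Prop :=
  ∀ i j : Fin p, (i : ℕ) + 1 = (j : ℕ) → f i ≠ f j

/-- The regular Mayer boundary `∂(e_{i_0⋯i_n}) = Σ_j ξ^j e_{i_0⋯î_j⋯i_n}`,
where irregular paths in the image are set to `0`. -/
noncomputable def rbdry (V : Type) (ξ : ℂ) (p : ℕ) : Lam V (p + 1) →ₗ[ℂ] Lam V p :=
  Finsupp.lsum ℂ fun f =>
    ∑ j : Fin (p + 1), (ξ ^ (j : ℕ)) •
      (if RegularPath (f ∘ j.succAbove) then Finsupp.lsingle (f ∘ j.succAbove) else 0)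

/-- The regular Mayer boundary in all degrees (zero on `0`-paths). -/
noncomputable def rbdry' (V : Type) (ξ : ℂ) : ∀ p, Lam V p →ₗ[ℂ] Lam V (p - 1)
  | 0 => 0
  | 1 => 0
  | p + 2 => rbdry V ξ (p + 1)

/-- The `r`-fold iterate `∂^r`. -/
noncomputable def rbdryIter (V : Type) (ξ : ℂ) :
    (r : ℕ) → (p : ℕ) → Lam V p →ₗ[ℂ] Lam V (p - r)
  | 0, _ => LinearMap.id
  | r + 1, p => (rbdry' V ξ (p - r)).comp (rbdryIter V ξ r p)

/-- `𝒜_p`: the span of the allowed paths of a path complex `P`. -/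
noncomputable def Allowed (V : Type) (P : ∀ p : ℕ, Set (Fin p → V)) (p : ℕ) : Submodule ℂ (Lam V p) :=
  Finsupp.supported ℂ ℂ (P p)


/-- The path complex of a digraph with edge set `E`. -/
def digraphPaths (V : Type) (E : Set (V × V)) : ∀ p : ℕ, Set (Fin p → V) :=
  fun p => {f | ∀ i j : Fin p, (i : ℕ) + 1 = (j : ℕ) → (f i, f j) ∈ E}

/-- An `(a,b)`-cluster: a linear combination of elementary paths all starting
at `a` and ending at `b`. -/
def IsCluster {V : Type} {n : ℕ} (a b : V) (w : Lam V (n + 1)) : Prop :=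
  ∀ f ∈ w.support, f 0 = a ∧ f (Fin.last n) = b

/-- Every element `v` of `Ω_n^{N,1}(P(G)) = {v ∈ 𝒜_n : ∂v ∈ 𝒜_{n-1}}`
decomposes as a sum `v = Σ_{a,b} v_{a,b}` of `(a,b)`-clusters, each of which
lies in `Ω_n^{N,1}` (here `n`-paths, having `n+1` vertices, live in
`Lam V (n+1)`). -/
lemma rbdry_apply_eq_zero {V : Type} (ξ : ℂ) (p : ℕ) (u : Lam V (p+1)) (g : Fin p → V)
    (h : ∀ f ∈ u.support, ∀ j : Fin (p+1), f ∘ j.succAbove ≠ g) :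
    rbdry V ξ p u g = 0 := by
  rw [rbdry, Finsupp.lsum_apply, Finsupp.sum_apply, Finsupp.sum]
  apply Finset.sum_eq_zero
  intro f hf
  rw [LinearMap.sum_apply, Finsupp.finset_sum_apply]
  apply Finset.sum_eq_zero
  intro j _
  rw [LinearMap.smul_apply, Finsupp.smul_apply]
  split_ifs with hr
  · rw [Finsupp.lsingle_apply, Finsupp.single_apply, if_neg (h f hf j), smul_zero]
  · simp

lemma endpoints_of_not_allowed {V : Type} {E : Set (V×V)} {m : ℕ} {f : Fin (m+2) → V}
    (hf : f ∈ digraphPaths V E (m+2)) {j : Fin (m+2)}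
    (hg : f ∘ j.succAbove ∉ digraphPaths V E (m+1)) :
    (f ∘ j.succAbove) 0 = f 0 ∧ (f ∘ j.succAbove) (Fin.last m) = f (Fin.last (m+1)) := by
  simp only [digraphPaths, Set.mem_setOf_eq, not_forall] at hg
  obtain ⟨k, k', hkk', hbad⟩ := hg
  simp only [Function.comp_apply] at hbad
  have hk' : (k' : ℕ) ≤ m := Nat.lt_succ_iff.mp k'.isLt
  rcases lt_or_ge k.castSucc j with h1 | h1
  · rcases lt_or_ge k'.castSucc j with h2 | h2
    · exact absurd (hf k.castSucc k'.castSucc (by simpa using hkk'))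
        (by rwa [← Fin.succAbove_of_castSucc_lt _ _ h1, ← Fin.succAbove_of_castSucc_lt _ _ h2])
    · -- interior removal: j = castSucc k'
      simp only [Fin.lt_def, Fin.le_def, Fin.coe_castSucc] at h1 h2
      have hj1 : 1 ≤ (j : ℕ) := by omega
      have hjm : (j : ℕ) ≤ m := by omega
      constructor
      · rw [Function.comp_apply,
          Fin.succAbove_of_castSucc_lt _ _ (by rw [Fin.lt_def]; simp only [Fin.coe_castSucc, Fin.val_zero]; omega),
          Fin.castSucc_zero]
      · rw [Function.comp_apply,
          Fin.succAbove_of_le_castSucc _ _ (by simp [Fin.le_def]; omega),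
          Fin.succ_last]
  · have h2 : j ≤ k'.castSucc := by
      simp only [Fin.le_def, Fin.coe_castSucc] at h1 ⊢; omega
    exact absurd (hf k.succ k'.succ (by simp only [Fin.val_succ]; omega))
      (by rwa [← Fin.succAbove_of_le_castSucc _ _ h1, ← Fin.succAbove_of_le_castSucc _ _ h2])

lemma rbdry_cluster_zero {V : Type} {E : Set (V×V)} (ξ : ℂ) {m : ℕ}
    (u : Lam V (m+2)) (g : Fin (m+1) → V)
    (hgn : g ∉ digraphPaths V E (m+1))
    (hu : ∀ f ∈ u.support, f ∈ digraphPaths V E (m+2) ∧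
      ¬(f 0 = g 0 ∧ f (Fin.last (m+1)) = g (Fin.last m))) :
    rbdry V ξ (m+1) u g = 0 := by
  apply rbdry_apply_eq_zero
  intro f hf j hc
  obtain ⟨hfA, hne⟩ := hu f hf
  have h := endpoints_of_not_allowed (E := E) hfA (by rw [hc]; exact hgn)
  rw [hc] at h
  exact hne ⟨h.1.symm, h.2.symm⟩

theorem omegaN1_cluster_decomposition (V : Type) (E : Set (V × V))
    (N : ℕ) (hN : 2 ≤ N) (ξ : ℂ) (hξ : IsPrimitiveRoot ξ N) (n : ℕ)
    (v : Lam V (n + 1))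
    (hvA : v ∈ Allowed V (digraphPaths V E) (n + 1))
    (hvO : rbdry' V ξ (n + 1) v ∈ Allowed V (digraphPaths V E) n) :
    ∃ (s : Finset (V × V)) (w : V × V → Lam V (n + 1)),
      v = ∑ ab ∈ s, w ab ∧
      ∀ ab ∈ s,
        IsCluster ab.1 ab.2 (w ab) ∧
        w ab ∈ Allowed V (digraphPaths V E) (n + 1) ∧
        rbdry' V ξ (n + 1) (w ab) ∈ Allowed V (digraphPaths V E) n := by
  classical
  have hvA' : ↑v.support ⊆ digraphPaths V E (n + 1) :=
    (Finsupp.mem_supported ℂ v).mp hvA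
  refine ⟨v.support.image (fun f => (f 0, f (Fin.last n))),
    fun ab => v.filter (fun f => f 0 = ab.1 ∧ f (Fin.last n) = ab.2), ?_, ?_⟩
  · ext g
    rw [Finsupp.finset_sum_apply]
    have hterm : ∀ ab ∈ v.support.image (fun f => (f 0, f (Fin.last n))),
        (v.filter (fun f => f 0 = ab.1 ∧ f (Fin.last n) = ab.2)) g
          = if ab = (g 0, g (Fin.last n)) then v g else 0 := by
      intro ab _
      rw [Finsupp.filter_apply]
      refine if_congr ?_ rfl rfl
      rw [Prod.ext_iff]
      constructor
      · rintro ⟨h1, h2⟩; exact ⟨h1.symm, h2.symm⟩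
      · rintro ⟨h1, h2⟩; exact ⟨h1.symm, h2.symm⟩
    rw [Finset.sum_congr rfl hterm, Finset.sum_ite_eq']
    split_ifs with hmem
    · rfl
    · by_contra hg
      exact hmem (Finset.mem_image_of_mem _ (Finsupp.mem_support_iff.mpr hg))
  · intro ab hab
    have hsupp : ∀ f ∈ (v.filter (fun f => f 0 = ab.1 ∧ f (Fin.last n) = ab.2)).support,
        f ∈ v.support ∧ (f 0 = ab.1 ∧ f (Fin.last n) = ab.2) := by
      intro f hf
      rw [Finsupp.support_filter, Finset.mem_filter] at hf
      exact hf
    refine ⟨fun f hf => (hsupp f hf).2, ?_, ?_⟩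
    · exact (Finsupp.mem_supported ℂ _).mpr fun f hf => hvA' ((hsupp f hf).1)
    · -- boundary is allowed
      cases n with
      | zero =>
        show (0 : Lam V 1 →ₗ[ℂ] Lam V 0) _ ∈ _
        simp only [LinearMap.zero_apply]
        exact Submodule.zero_mem _
      | succ m =>
        rw [show rbdry' V ξ (m + 1 + 1) = rbdry V ξ (m + 1) from rfl] at hvO ⊢
        set u := v.filter (fun f => f 0 = ab.1 ∧ f (Fin.last (m+1)) = ab.2) with hu
        refine (Finsupp.mem_supported ℂ _).mpr fun g hg => ?_
        by_contra hgn
        rw [Finset.mem_coe, Finsupp.mem_support_iff] at hg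
        apply hg
        by_cases hmatch : ab.1 = g 0 ∧ ab.2 = g (Fin.last m)
        · -- matching cluster: compare with full boundary
          have hsplit : u + v.filter (fun f => ¬(f 0 = ab.1 ∧ f (Fin.last (m+1)) = ab.2)) = v :=
            Finsupp.filter_pos_add_filter_neg v _
          have hz1 : rbdry V ξ (m+1) (v.filter (fun f => ¬(f 0 = ab.1 ∧ f (Fin.last (m+1)) = ab.2))) g = 0 := by
            refine rbdry_cluster_zero (E := E) ξ _ g hgn fun f hf => ?_
            rw [Finsupp.support_filter, Finset.mem_filter] at hf
            refine ⟨hvA' hf.1, fun hc => hf.2 ⟨hc.1.trans hmatch.1.symm, hc.2.trans hmatch.2.symm⟩⟩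
          have hz2 : rbdry V ξ (m+1) v g = 0 := by
            have hsub : ↑(rbdry V ξ (m+1) v).support ⊆ digraphPaths V E (m+1) :=
              (Finsupp.mem_supported ℂ _).mp hvO
            by_contra hne
            exact hgn (hsub (Finsupp.mem_support_iff.mpr hne))
          have := congrArg (fun x => rbdry V ξ (m+1) x g) hsplit
          simp only [map_add, Finsupp.add_apply, hz1, hz2, add_zero] at this
          exact this
        · -- non-matching cluster: everything vanishes termwise
          refine rbdry_cluster_zero (E := E) ξ _ g hgn fun f hf => ?_
          obtain ⟨hfv, hf1, hf2⟩ := hsupp f hf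
          exact ⟨hvA' hfv, fun hc => hmatch ⟨hf1.symm.trans hc.1, hf2.symm.trans hc.2⟩⟩
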